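/- Let q be a prime power, k > 1, Δ = (q^k − 1)/(q − 1), γ a primitive element of F_{q^k}, and let e₁, e₂ be integers with gcd(q − 1, k·e₁ − e₂) = 1 and gcd(Δ, e₂) = 1. For a, b ∈ F_{q^k} let c(a, b) ∈ (Fin (q^k − 1) → F_q) be the vector with i-th entry Tr(a·γ^{Δe₁·i} + b·γ^{e₂·i}), and let C = { c(a, b) : a, b ∈ F_{q^k} }. Then C has exactly q^{k+1} elements, and its Hamming-weight distribution is: exactly 1 element of weight 0, exactly (q − 1)(q^k − 1) elements of weight q^{k−1}(q − 1) − 1, exactly q^k − 1 elements of weight q^{k−1}(q − 1), exactly q − 1 elements of weight q^k − 1, and no elements of any other weight. -/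

import Mathlib

private lemma aux_mem_range_algebraMap {F E : Type*} [Field F] [Fintype F] [Field E] [Fintype E]
    [Algebra F E] (x : E) (hx : x ^ (Fintype.card F - 1) = 1) :
    ∃ u : Fˣ, algebraMap F E u = x := by
  classical
  set m := Fintype.card F - 1 with hm
  have hm0 : 0 < m := by
    have := Fintype.one_lt_card (α := F)
    omega
  set S : Finset E := Finset.univ.image (fun u : Fˣ => algebraMap F E (u : F)) with hS
  have hScard : S.card = m := by
    rw [hS, Finset.card_image_of_injective _ ?_, Finset.card_univ, Fintype.card_units]
    intro a b hab
    exact Units.ext ((algebraMap F E).injective hab)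
  have hSsub : S ⊆ (Polynomial.nthRoots m (1 : E)).toFinset := by
    intro y hy
    simp only [hS, Finset.mem_image] at hy
    obtain ⟨u, -, rfl⟩ := hy
    rw [Multiset.mem_toFinset, Polynomial.mem_nthRoots hm0, ← map_pow,
      FiniteField.pow_card_sub_one_eq_one (u : F) u.ne_zero, map_one]
  have hxmem : x ∈ (Polynomial.nthRoots m (1 : E)).toFinset := by
    rw [Multiset.mem_toFinset, Polynomial.mem_nthRoots hm0]; exact hx
  have hcard2 : ((Polynomial.nthRoots m (1:E)).toFinset).card ≤ m :=
    le_trans (Multiset.toFinset_card_le _) (Polynomial.card_nthRoots m 1)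
  by_contra h
  push_neg at h
  have hxS : x ∉ S := by
    intro hxS
    simp only [hS, Finset.mem_image] at hxS
    obtain ⟨u, -, hu⟩ := hxS
    exact h u hu
  have : m + 1 ≤ m := by
    calc m + 1 = (insert x S).card := by rw [Finset.card_insert_of_notMem hxS, hScard]
    _ ≤ _ := Finset.card_le_card (Finset.insert_subset hxmem hSsub)
    _ ≤ m := hcard2
  omega

private lemma aux_fiber_card {F E : Type*} [Field F] [Fintype F] [DecidableEq F] [Field E]
    [Fintype E] [Algebra F E]
    (hsurj : Function.Surjective (Algebra.trace F E)) (t : F) :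
    Fintype.card F * (Finset.univ.filter fun y : E => Algebra.trace F E y = t).card
      = Fintype.card E := by
  classical
  have key : ∀ t' : F, (Finset.univ.filter fun y : E => Algebra.trace F E y = t').card
      = (Finset.univ.filter fun y : E => Algebra.trace F E y = t).card := by
    intro t'
    obtain ⟨d, hd⟩ := hsurj (t - t')
    apply Finset.card_bij (fun y _ => y + d)
    · intro y hy
      simp only [Finset.mem_filter, Finset.mem_univ, true_and] at hy ⊢
      rw [map_add, hy, hd]; ring
    · intro a _ b _ h; exact add_right_cancel h
    · intro y hy
      simp only [Finset.mem_filter, Finset.mem_univ, true_and] at hy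
      refine ⟨y - d, ?_, by ring⟩
      simp only [Finset.mem_filter, Finset.mem_univ, true_and, map_sub, hy, hd]
      ring
  have := Finset.card_eq_sum_card_fiberwise
      (f := Algebra.trace F E) (s := (Finset.univ : Finset E)) (t := Finset.univ)
      (fun x _ => Finset.mem_univ _)
  rw [Finset.card_univ] at this
  rw [this, Finset.sum_congr rfl (fun t' _ => key t'), Finset.sum_const, Finset.card_univ,
    smul_eq_mul]

set_option maxHeartbeats 1000000 in
/-- The code `C = C_{(Δe₁, e₂)}` (realized via Delsarte's theorem as trace codewords)
has exactly `q^{k+1}` elements and the weight distribution of Table I of the paper. -/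
theorem code_weight_distribution
    (q k : ℕ) (hk : 1 < k)
    (F E : Type*) [Field F] [Fintype F] [DecidableEq F] [Field E] [Fintype E] [Algebra F E]
    (hcard : Fintype.card F = q) (hE : Fintype.card E = q ^ k)
    (γ : Eˣ) (hγ : ∀ x : Eˣ, x ∈ Subgroup.zpowers γ)
    (Δ e₁ e₂ : ℤ) (hΔ : Δ * ((q : ℤ) - 1) = (q : ℤ) ^ k - 1)
    (hgcd : Int.gcd ((q : ℤ) - 1) ((k : ℤ) * e₁ - e₂) = 1)
    (he₂ : Int.gcd Δ e₂ = 1)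
    (C : Set (Fin (q ^ k - 1) → F))
    (hC : C = {c : Fin (q ^ k - 1) → F | ∃ a b : E,
      c = fun i : Fin (q ^ k - 1) => Algebra.trace F E
        (a * ((γ ^ (Δ * e₁ * (i : ℤ)) : Eˣ) : E) + b * ((γ ^ (e₂ * (i : ℤ)) : Eˣ) : E))}) :
    Nat.card C = q ^ (k + 1) ∧
    {c ∈ C | hammingNorm c = 0}.ncard = 1 ∧
    {c ∈ C | hammingNorm c = q ^ (k - 1) * (q - 1) - 1}.ncard = (q - 1) * (q ^ k - 1) ∧
    {c ∈ C | hammingNorm c = q ^ (k - 1) * (q - 1)}.ncard = q ^ k - 1 ∧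
    {c ∈ C | hammingNorm c = q ^ k - 1}.ncard = q - 1 ∧
    (∀ c ∈ C, hammingNorm c ∈
      ({0, q ^ (k - 1) * (q - 1) - 1, q ^ (k - 1) * (q - 1), q ^ k - 1} : Set ℕ)) := by
  classical
  subst hC
  have hq : 2 ≤ q := by rw [← hcard]; exact Fintype.one_lt_card
  -- arithmetic setup
  set P := q ^ (k - 1) with hPdef
  set Q := q ^ k with hQdef
  have hPQ : P * q = Q := by rw [hPdef, hQdef, ← pow_succ]; congr 1; omega
  have hP2 : 2 ≤ P := le_trans hq (Nat.le_self_pow (by omega) q)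
  set A := P * (q - 1) with hAdef
  have hAPQ : A + P = Q := by
    rw [hAdef, ← hPQ, ← Nat.mul_succ]; congr 1; omega
  have hA2 : 2 ≤ A := by
    calc 2 = 2 * 1 := by norm_num
    _ ≤ P * (q - 1) := Nat.mul_le_mul hP2 (by omega)
    _ = A := hAdef.symm
  clear_value P Q A
  obtain ⟨e1, e2, e3, e4, e5, e6⟩ :
      (A - 1 ≠ 0) ∧ (Q - 1 ≠ 0) ∧ (A ≠ 0) ∧ (Q - 1 ≠ A - 1) ∧ (A ≠ A - 1) ∧ (Q - 1 ≠ A) := by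
    refine ⟨?_, ?_, ?_, ?_, ?_, ?_⟩ <;> omega
  -- trace is surjective with fibers of size P
  have htr_surj : Function.Surjective (Algebra.trace F E) := Algebra.trace_surjective F E
  have htr : ∀ t : F, (Finset.univ.filter fun y : E => Algebra.trace F E y = t).card = P := by
    intro t
    have h1 := aux_fiber_card htr_surj t
    rw [hcard, hE] at h1
    apply Nat.eq_of_mul_eq_mul_left (show 0 < q by omega)
    rw [h1, ← hPQ, mul_comm]
  -- the order of γ
  have hEq : Fintype.card Eˣ = Q - 1 := by rw [Fintype.card_units, hE]
  have hord : orderOf γ = Q - 1 := by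
    rw [← hEq, ← Nat.card_eq_fintype_card]; exact orderOf_eq_card_of_forall_mem_zpowers hγ
  have hcast : ((Q - 1 : ℕ) : ℤ) = Δ * ((q : ℤ) - 1) := by
    rw [hΔ, hQdef]
    push_cast [Nat.one_le_iff_ne_zero.mpr (by positivity : q ^ k ≠ 0)]
    ring
  have hγQ : ∀ m : ℤ, ((Q - 1 : ℕ) : ℤ) ∣ m → γ ^ m = (1 : Eˣ) := by
    intro m hm
    obtain ⟨c, rfl⟩ := hm
    rw [zpow_mul, zpow_natCast, ← hord, pow_orderOf_eq_one, one_zpow]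
  -- the subfield unit B with algebraMap B = γ^Δ
  obtain ⟨B, hB⟩ : ∃ u : Fˣ, algebraMap F E u = ((γ ^ Δ : Eˣ) : E) := by
    apply aux_mem_range_algebraMap
    rw [hcard]
    have : ((γ ^ Δ : Eˣ) ^ (q - 1) : Eˣ) = 1 := by
      rw [← zpow_natCast, ← zpow_mul]
      apply hγQ
      rw [hcast]
      push_cast [Nat.one_le_iff_ne_zero.mpr (by omega : q ≠ 0)]
      exact ⟨1, by ring⟩
    calc ((γ ^ Δ : Eˣ) : E) ^ (q - 1) = (((γ ^ Δ : Eˣ) ^ (q - 1) : Eˣ) : E) := by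
          rw [Units.val_pow_eq_pow_val]
    _ = 1 := by rw [this, Units.val_one]
  have hBpow : ∀ m : ℤ, ((γ ^ (Δ * m) : Eˣ) : E) = algebraMap F E ((B ^ m : Fˣ) : F) := by
    intro m
    have hBu : Units.map (algebraMap F E : F →+* E).toMonoidHom B = γ ^ Δ :=
      Units.ext (by simpa using hB)
    rw [zpow_mul, ← hBu, ← map_zpow]
    rfl
  have hmul : ∀ (c : F) (y : E),
      Algebra.trace F E (y * algebraMap F E c) = c * Algebra.trace F E y := by
    intro c y
    rw [mul_comm, ← Algebra.smul_def, map_smul, smul_eq_mul]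
  set f : ℤ := e₂ - Δ * e₁ with hfdef
  -- the pointwise identity
  have hpoint : ∀ (a b : E) (m : ℤ),
      Algebra.trace F E (a * ((γ ^ (Δ * e₁ * m) : Eˣ) : E) + b * ((γ ^ (e₂ * m) : Eˣ) : E))
        = ((B ^ (e₁ * m) : Fˣ) : F) *
          (Algebra.trace F E a + Algebra.trace F E (b * ((γ ^ (f * m) : Eˣ) : E))) := by
    intro a b m
    have h1 : Δ * e₁ * m = Δ * (e₁ * m) := by ring
    have h2 : e₂ * m = f * m + Δ * (e₁ * m) := by rw [hfdef]; ring
    rw [h1, h2, zpow_add, Units.val_mul, hBpow, ← mul_assoc, map_add, hmul, hmul, mul_add]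
  -- f is coprime to Q - 1
  have hcop : IsCoprime ((Q - 1 : ℕ) : ℤ) f := by
    have h1 : IsCoprime Δ f := by
      have : f = e₂ + Δ * (-e₁) := by rw [hfdef]; ring
      rw [this]
      exact (Int.isCoprime_iff_gcd_eq_one.mpr he₂).add_mul_left_right _
    have h2 : IsCoprime ((q : ℤ) - 1) f := by
      obtain ⟨m, hm⟩ : ((q:ℤ) - 1) ∣ (Δ - k) := by
        have hΔeq : Δ = ∑ j ∈ Finset.range k, (q:ℤ)^j := by
          have hgs : (∑ j ∈ Finset.range k, (q:ℤ)^j) * ((q:ℤ) - 1) = (q:ℤ)^k - 1 :=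
            geom_sum_mul _ _
          have hq1 : ((q:ℤ) - 1) ≠ 0 := by
            have : (2:ℤ) ≤ (q:ℤ) := by exact_mod_cast hq
            omega
          exact mul_right_cancel₀ hq1 (by rw [hΔ, hgs])
        have hsum : Δ - k = ∑ j ∈ Finset.range k, ((q:ℤ)^j - 1) := by
          rw [Finset.sum_sub_distrib, ← hΔeq, Finset.sum_const, Finset.card_range]
          push_cast
          ring
        rw [hsum]
        exact Finset.dvd_sum fun j _ => by simpa using sub_dvd_pow_sub_pow (q:ℤ) 1 j
      have hf2 : f = -((k:ℤ) * e₁ - e₂) + ((q:ℤ)-1) * (-(m * e₁)) := by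
        rw [hfdef]
        have : Δ = (k:ℤ) + ((q:ℤ)-1) * m := by omega
        rw [this]; ring
      rw [hf2]
      exact ((Int.isCoprime_iff_gcd_eq_one.mpr hgcd).neg_right).add_mul_left_right _
    rw [hcast]
    exact (h1.mul_left h2)
  -- the bijection i ↦ γ ^ (f i)
  set φ : Fin (Q - 1) → Eˣ := fun i => γ ^ (f * (i : ℤ)) with hφdef
  have hφinj : Function.Injective φ := by
    intro i j hij
    have h1 : f * (i : ℤ) ≡ f * (j : ℤ) [ZMOD orderOf γ] := by
      rwa [← zpow_eq_zpow_iff_modEq]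
    rw [hord] at h1
    have h2 : ((Q - 1 : ℕ) : ℤ) ∣ ((j : ℤ) - (i : ℤ)) * f := by
      have h3 := Int.ModEq.dvd h1
      have h4 : f * (j : ℤ) - f * (i : ℤ) = ((j : ℤ) - (i : ℤ)) * f := by ring
      rwa [h4] at h3
    have h5 : ((Q - 1 : ℕ) : ℤ) ∣ ((j : ℤ) - (i : ℤ)) := hcop.dvd_of_dvd_mul_right h2
    have h6 : ((j : ℤ) - (i : ℤ)) = 0 := by
      apply Int.eq_zero_of_abs_lt_dvd h5
      have hi := i.isLt
      have hj := j.isLt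
      rw [abs_sub_lt_iff]
      constructor <;> [skip; skip] <;>
        · push_cast
          omega
    have : (i : ℕ) = (j : ℕ) := by omega
    exact Fin.ext this
  have hφbij : Function.Bijective φ :=
    (Fintype.bijective_iff_injective_and_card φ).mpr ⟨hφinj, by simp [hEq]⟩
  have hcount : ∀ (p : Eˣ → Prop) [DecidablePred p],
      (Finset.univ.filter fun i : Fin (Q - 1) => p (φ i)).card
        = (Finset.univ.filter fun x : Eˣ => p x).card := by
    intro p _
    apply Finset.card_bij (fun i _ => φ i)
    · intro i hi
      simp only [Finset.mem_filter, Finset.mem_univ, true_and] at hi ⊢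
      exact hi
    · intro a _ b _ h
      exact hφinj h
    · intro x hx
      simp only [Finset.mem_filter, Finset.mem_univ, true_and] at hx
      obtain ⟨i, rfl⟩ := hφbij.2 x
      exact ⟨i, by simpa using hx, rfl⟩
  -- the parametrization of the code
  set W : F × E → (Fin (Q - 1) → F) := fun p i =>
    ((B ^ (e₁ * (i : ℤ)) : Fˣ) : F) *
      (p.1 + Algebra.trace F E (p.2 * ((γ ^ (f * (i : ℤ)) : Eˣ) : E))) with hWdef
  have hCW : {c : Fin (Q - 1) → F | ∃ a b : E,
      c = fun i : Fin (Q - 1) => Algebra.trace F E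
        (a * ((γ ^ (Δ * e₁ * (i : ℤ)) : Eˣ) : E) + b * ((γ ^ (e₂ * (i : ℤ)) : Eˣ) : E))}
      = Set.range W := by
    ext c
    constructor
    · rintro ⟨a, b, rfl⟩
      refine ⟨(Algebra.trace F E a, b), ?_⟩
      funext i
      rw [hWdef]
      exact (hpoint a b i).symm
    · rintro ⟨⟨s, b⟩, rfl⟩
      obtain ⟨a, ha⟩ := htr_surj s
      refine ⟨a, b, ?_⟩
      funext i
      rw [hpoint a b i, hWdef, ha]
  -- weight formula
  have hWnorm : ∀ s : F, ∀ b : E, hammingNorm (W (s, b)) =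
      if b = 0 then (if s = 0 then 0 else Q - 1)
      else (if s = 0 then Q - P else Q - P - 1) := by
    intro s b
    have step1 : hammingNorm (W (s, b)) =
        (Finset.univ.filter fun x : Eˣ =>
          s + Algebra.trace F E (b * (x : E)) ≠ 0).card := by
      rw [← hcount (fun x : Eˣ => s + Algebra.trace F E (b * (x : E)) ≠ 0)]
      unfold hammingNorm
      apply Finset.card_bij (fun i _ => i)
      · intro i hi
        simp only [Finset.mem_filter, Finset.mem_univ, true_and] at hi ⊢
        intro h
        simp only [hφdef] at h
        apply hi
        rw [hWdef]
        simp only [h, mul_zero]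
      · intro a b _ _ h
        exact h
      · intro i hi
        refine ⟨i, ?_, rfl⟩
        simp only [Finset.mem_filter, Finset.mem_univ, true_and] at hi ⊢
        intro h
        apply hi
        rcases mul_eq_zero.mp h with h' | h'
        · exact absurd h' (Units.ne_zero _)
        · exact h'
    rw [step1]
    by_cases hb : b = 0
    · subst hb
      rw [if_pos rfl]
      by_cases hs : s = 0
      · subst hs
        rw [if_pos rfl]
        simp
      · rw [if_neg hs]
        rw [show (Finset.univ.filter fun x : Eˣ =>
            s + Algebra.trace F E ((0 : E) * (x : E)) ≠ 0) = Finset.univ by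
          ext x; simp [hs]]
        rw [Finset.card_univ, hEq]
    · rw [if_neg hb]
      set bu : Eˣ := Units.mk0 b hb with hbu
      have step2 : (Finset.univ.filter fun x : Eˣ =>
          s + Algebra.trace F E (b * (x : E)) ≠ 0).card
          = (Finset.univ.filter fun y : Eˣ => s + Algebra.trace F E (y : E) ≠ 0).card := by
        apply Finset.card_bij (fun x _ => bu * x)
        · intro x hx
          simp only [Finset.mem_filter, Finset.mem_univ, true_and] at hx ⊢
          simpa only [Units.val_mul, hbu, Units.val_mk0] using hx
        · intro a _ c _ h
          exact mul_left_cancel h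
        · intro y hy
          simp only [Finset.mem_filter, Finset.mem_univ, true_and] at hy
          refine ⟨bu⁻¹ * y, ?_, by group⟩
          simp only [Finset.mem_filter, Finset.mem_univ, true_and]
          have : b * ((bu⁻¹ * y : Eˣ) : E) = (y : E) := by
            rw [Units.val_mul, ← mul_assoc]
            have : b * ((bu⁻¹ : Eˣ) : E) = 1 := by
              rw [hbu]
              exact Units.mul_inv (Units.mk0 b hb)
            rw [this, one_mul]
          rwa [this]
      rw [step2]
      have step3 : (Finset.univ.filter fun y : Eˣ =>
          s + Algebra.trace F E (y : E) ≠ 0).card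
          = ((Finset.univ.filter fun z : E =>
              s + Algebra.trace F E z ≠ 0).erase 0).card := by
        refine Finset.card_bij (fun y _ => (y : E)) ?_ ?_ ?_
        · intro y hy
          simp only [Finset.mem_filter, Finset.mem_univ, true_and] at hy
          rw [Finset.mem_erase]
          exact ⟨Units.ne_zero y, by simp only [Finset.mem_filter, Finset.mem_univ, true_and]; exact hy⟩
        · intro a _ c _ h
          exact Units.ext h
        · intro z hz
          rw [Finset.mem_erase] at hz
          obtain ⟨hz0, hz1⟩ := hz
          simp only [Finset.mem_filter, Finset.mem_univ, true_and] at hz1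
          exact ⟨Units.mk0 z hz0, by simpa using hz1, rfl⟩
      rw [step3]
      have hAcard : (Finset.univ.filter fun z : E =>
          s + Algebra.trace F E z ≠ 0).card = Q - P := by
        have hpred : ∀ z : E, (s + Algebra.trace F E z ≠ 0) ↔
            ¬ (Algebra.trace F E z = -s) := by
          intro z
          constructor
          · intro h h'
            apply h
            rw [h']
            ring
          · intro h h'
            apply h
            linear_combination h' - s
        rw [Finset.filter_congr (fun z _ => by rw [hpred z]), Finset.filter_not,
          Finset.card_sdiff_of_subset (Finset.filter_subset _ _), Finset.card_univ, hE, htr]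
      by_cases hs : s = 0
      · subst hs
        rw [if_pos rfl]
        have h0 : (0 : E) ∉ (Finset.univ.filter fun z : E =>
            (0 : F) + Algebra.trace F E z ≠ 0) := by
          simp
        rw [Finset.erase_eq_of_notMem h0, hAcard]
      · rw [if_neg hs]
        have h0 : (0 : E) ∈ (Finset.univ.filter fun z : E =>
            s + Algebra.trace F E z ≠ 0) := by
          simp [hs]
        rw [Finset.card_erase_of_mem h0, hAcard]
  -- injectivity of W
  have hWinj : Function.Injective W := by
    rintro ⟨s, b⟩ ⟨s', b'⟩ h
    have h1 : ∀ x : Eˣ, s + Algebra.trace F E (b * (x : E))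
        = s' + Algebra.trace F E (b' * (x : E)) := by
      intro x
      obtain ⟨i, rfl⟩ := hφbij.2 x
      have h2 := congrFun h i
      rw [hWdef] at h2
      simp only at h2
      exact mul_left_cancel₀ (Units.ne_zero (B ^ (e₁ * (i : ℤ)))) h2
    have hbb : b = b' := by
      by_contra hne
      have hd : b - b' ≠ 0 := sub_ne_zero.mpr hne
      have h3 : ∀ y : Eˣ, Algebra.trace F E (y : E) = s' - s := by
        intro y
        have h4 := h1 ((Units.mk0 (b - b') hd)⁻¹ * y)
        have h5 : (b - b') * (((Units.mk0 (b - b') hd)⁻¹ * y : Eˣ) : E) = (y : E) := by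
          rw [Units.val_mul, ← mul_assoc]
          have : (b - b') * ((Units.mk0 (b - b') hd)⁻¹ : Eˣ) = 1 :=
            Units.mul_inv (Units.mk0 (b - b') hd)
          rw [this, one_mul]
        have h6 : Algebra.trace F E ((b - b') *
            (((Units.mk0 (b - b') hd)⁻¹ * y : Eˣ) : E)) = s' - s := by
          rw [sub_mul, map_sub]
          linear_combination h4
        rw [h5] at h6
        exact h6
      have hsubset : Finset.univ.erase (0 : E) ⊆
          Finset.univ.filter fun z : E => Algebra.trace F E z = s' - s := by
        intro z hz
        rw [Finset.mem_erase] at hz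
        simp only [Finset.mem_filter, Finset.mem_univ, true_and]
        have := h3 (Units.mk0 z hz.1)
        simpa using this
      have hle := Finset.card_le_card hsubset
      rw [Finset.card_erase_of_mem (Finset.mem_univ _), Finset.card_univ, hE, htr] at hle
      omega
    subst hbb
    have h7 := h1 1
    simp only [Units.val_one, mul_one] at h7
    have : s = s' := by
      have := add_right_cancel h7
      exact this
    rw [this]
  -- the code as a set
  rw [hCW]
  -- images of parameter sets
  have himg : ∀ v : ℕ, {c ∈ Set.range W | hammingNorm c = v}
      = W '' {p : F × E | hammingNorm (W p) = v} := by
    intro v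
    ext c
    constructor
    · rintro ⟨⟨p, rfl⟩, hv⟩
      exact ⟨p, hv, rfl⟩
    · rintro ⟨p, hv, rfl⟩
      exact ⟨⟨p, rfl⟩, hv⟩
  have hncard : ∀ v : ℕ, {c ∈ Set.range W | hammingNorm c = v}.ncard
      = {p : F × E | hammingNorm (W p) = v}.ncard := by
    intro v
    rw [himg v, Set.ncard_image_of_injective _ hWinj]
  -- weight of W p via cases, as a statement about p
  have hWp : ∀ p : F × E, hammingNorm (W p) =
      if p.2 = 0 then (if p.1 = 0 then 0 else Q - 1)
      else (if p.1 = 0 then Q - P else Q - P - 1) := by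
    rintro ⟨s, b⟩
    exact hWnorm s b
  -- the four values are distinct
  have hQP1 : Q - P = A := by omega
  have hQP2 : Q - P - 1 = A - 1 := by omega
  -- parameter-set descriptions
  have hset0 : {p : F × E | hammingNorm (W p) = 0} = {p | p.2 = 0 ∧ p.1 = 0} := by
    ext p
    rw [Set.mem_setOf_eq, hWp p, Set.mem_setOf_eq, hQP1]
    split_ifs with h1 h2 h2
    · exact iff_of_true rfl ⟨h1, h2⟩
    · exact iff_of_false e2 (fun hc => h2 hc.2)
    · exact iff_of_false e3 (fun hc => h1 hc.1)
    · exact iff_of_false e1 (fun hc => h1 hc.1)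
  have hset1 : {p : F × E | hammingNorm (W p) = A - 1} = {p | p.2 ≠ 0 ∧ p.1 ≠ 0} := by
    ext p
    rw [Set.mem_setOf_eq, hWp p, Set.mem_setOf_eq, hQP1]
    split_ifs with h1 h2 h2
    · exact iff_of_false (fun h => e1 h.symm) (fun hc => hc.1 h1)
    · exact iff_of_false e4 (fun hc => hc.1 h1)
    · exact iff_of_false e5 (fun hc => hc.2 h2)
    · exact iff_of_true rfl ⟨h1, h2⟩
  have hset2 : {p : F × E | hammingNorm (W p) = A} = {p | p.2 ≠ 0 ∧ p.1 = 0} := by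
    ext p
    rw [Set.mem_setOf_eq, hWp p, Set.mem_setOf_eq, hQP1]
    split_ifs with h1 h2 h2
    · exact iff_of_false (fun h => e3 h.symm) (fun hc => hc.1 h1)
    · exact iff_of_false e6 (fun hc => hc.1 h1)
    · exact iff_of_true rfl ⟨h1, h2⟩
    · exact iff_of_false (fun h => e5 h.symm) (fun hc => h2 hc.2)
  have hset3 : {p : F × E | hammingNorm (W p) = Q - 1} = {p | p.2 = 0 ∧ p.1 ≠ 0} := by
    ext p
    rw [Set.mem_setOf_eq, hWp p, Set.mem_setOf_eq, hQP1]
    split_ifs with h1 h2 h2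
    · exact iff_of_false (fun h => e2 h.symm) (fun hc => hc.2 h2)
    · exact iff_of_true rfl ⟨h1, h2⟩
    · exact iff_of_false (fun h => e6 h.symm) (fun hc => h1 hc.1)
    · exact iff_of_false (fun h => e4 h.symm) (fun hc => h1 hc.1)
  -- counting the parameter sets
  have hfin : ∀ (pF : F → Prop) (pE : E → Prop) [DecidablePred pF] [DecidablePred pE],
      {p : F × E | pE p.2 ∧ pF p.1}.ncard
        = (Finset.univ.filter pF).card * (Finset.univ.filter pE).card := by
    intro pF pE _ _
    have : {p : F × E | pE p.2 ∧ pF p.1}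
        = ↑((Finset.univ.filter pF) ×ˢ (Finset.univ.filter pE)) := by
      ext ⟨s, b⟩
      simp [and_comm]
    rw [this, Set.ncard_coe_finset, Finset.card_product]
  have hcF0 : (Finset.univ.filter fun s : F => s = 0).card = 1 := by
    rw [show (Finset.univ.filter fun s : F => s = 0) = {0} by ext s; simp]
    rfl
  have hcFne : (Finset.univ.filter fun s : F => s ≠ 0).card = q - 1 := by
    rw [show (Finset.univ.filter fun s : F => s ≠ 0) = Finset.univ.erase 0 by
      ext s; simp [Finset.mem_erase, and_comm]]
    rw [Finset.card_erase_of_mem (Finset.mem_univ _), Finset.card_univ, hcard]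
  have hcE0 : (Finset.univ.filter fun b : E => b = 0).card = 1 := by
    rw [show (Finset.univ.filter fun b : E => b = 0) = {0} by ext b; simp]
    rfl
  have hcEne : (Finset.univ.filter fun b : E => b ≠ 0).card = Q - 1 := by
    rw [show (Finset.univ.filter fun b : E => b ≠ 0) = Finset.univ.erase 0 by
      ext b; simp [Finset.mem_erase, and_comm]]
    rw [Finset.card_erase_of_mem (Finset.mem_univ _), Finset.card_univ, hE]
  refine ⟨?_, ?_, ?_, ?_, ?_, ?_⟩
  · rw [Nat.card_range_of_injective hWinj, Nat.card_prod, Nat.card_eq_fintype_card,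
      Nat.card_eq_fintype_card, hcard, hE, hQdef, ← pow_succ']
  · rw [hncard 0, hset0]
    have : {p : F × E | p.2 = 0 ∧ p.1 = 0} = {((0 : F), (0 : E))} := by
      ext ⟨s, b⟩
      simp only [Set.mem_setOf_eq, Set.mem_singleton_iff, Prod.mk.injEq]
      tauto
    rw [this, Set.ncard_singleton]
  · rw [hncard (A - 1), hset1, hfin (fun s => s ≠ 0) (fun b => b ≠ 0), hcFne, hcEne]
  · rw [hncard A, hset2, hfin (fun s => s = 0) (fun b => b ≠ 0), hcF0, hcEne, one_mul]
  · rw [hncard (Q - 1), hset3, hfin (fun s => s ≠ 0) (fun b => b = 0), hcFne, hcE0, mul_one]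
  · rintro c ⟨p, rfl⟩
    rw [hWp p, hQP1]
    split_ifs <;> simp
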